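/- Let m ≥ 4 and let C be an m×n binary 2-covering array such that wt(c^i) ≤ ⌊m/2⌋ for every column c^i of C. Then there exists an m×n binary 2-covering array C' whose columns c'^i satisfy wt(c'^i) = ⌊m/2⌋ and supp(c^i) ⊆ supp(c'^i) for all i = 1,…,n. -/

import Mathlib

/-- An `m × n` matrix over `B_q = {0,…,q-1}` is a `t`-covering array if for any `t`
distinct column indices and any `q`-ary vector of length `t`, some row realizes it. -/
def IsCoveringArray (m n q t : ℕ) (C : Fin m → Fin n → Fin q) : Prop :=
  ∀ cols : Fin t → Fin n, Function.Injective cols →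
    ∀ v : Fin t → Fin q, ∃ r : Fin m, ∀ j : Fin t, C r (cols j) = v j

/-- `CAN t n q` : the minimal size `m` for which a `CA(m; t, n, q)` exists. -/
noncomputable def CAN (t n q : ℕ) : ℕ :=
  sInf { m | ∃ C : Fin m → Fin n → Fin q, IsCoveringArray m n q t C }

/-- The weight of the `i`-th column: the number of nonzero entries. -/
def colWt {m n q : ℕ} (C : Fin m → Fin n → Fin q) (i : Fin n) : ℕ :=
  (Finset.univ.filter fun r : Fin m => (C r i : ℕ) ≠ 0).card

/-- The support of the `i`-th column: the set of coordinates where it is nonzero. -/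
def colSupp {m n q : ℕ} (C : Fin m → Fin n → Fin q) (i : Fin n) : Finset (Fin m) :=
  Finset.univ.filter fun r : Fin m => (C r i : ℕ) ≠ 0

/-- The Hamming distance between the `i`-th and `j`-th columns. -/
def colDist {m n q : ℕ} (C : Fin m → Fin n → Fin q) (i j : Fin n) : ℕ :=
  (Finset.univ.filter fun r : Fin m => C r i ≠ C r j).card

/-- Two arrays are equivalent if one is obtained from the other by a row permutation,
a column permutation, and value permutations applied columnwise. -/
def CAEquiv {m n q : ℕ} (C C' : Fin m → Fin n → Fin q) : Prop :=
  ∃ (σ : Equiv.Perm (Fin m)) (τ : Equiv.Perm (Fin n)) (f : Fin n → Equiv.Perm (Fin q)),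
    ∀ r i, C' r i = f i (C (σ r) (τ i))

/-- The standard maximal binary 2-covering array of size `m` : an
`m × (m-1).choose (m/2 - 1)` binary matrix whose first row is all ones and whose columns,
restricted to the remaining `m - 1` rows, are exactly (i.e. are pairwise distinct) the binary
vectors of length `m-1` with `m/2 - 1` ones. -/
def IsStandardMaxArray (m : ℕ) (S : Fin m → Fin ((m-1).choose (m/2 - 1)) → Fin 2) : Prop :=
  (∀ (r : Fin m) (i), (r : ℕ) = 0 → S r i = 1) ∧
  (Function.Injective fun i => fun r => S r i) ∧
  (∀ i, (Finset.univ.filter fun r : Fin m => (r : ℕ) ≠ 0 ∧ S r i = 1).card = m/2 - 1)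

open Finset

lemma supersets_eq (m k : ℕ) (S : Finset (Fin m)) (hS : S.card = k) :
    (univ.filter fun T : Finset (Fin m) => S ⊆ T ∧ T.card = k + 1)
      = Sᶜ.image (fun x => insert x S) := by
  ext T
  simp only [mem_filter, mem_univ, true_and, mem_image, mem_compl]
  constructor
  · rintro ⟨hsub, hcard⟩
    have : ∃ x ∈ T, x ∉ S := by
      by_contra h
      push_neg at h
      have : T ⊆ S := fun x hx => h x hx
      have := Finset.card_le_card this
      omega
    obtain ⟨x, hxT, hxS⟩ := this
    refine ⟨x, hxS, ?_⟩
    apply Finset.eq_of_subset_of_card_le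
    · exact Finset.insert_subset hxT hsub
    · rw [Finset.card_insert_of_notMem hxS]; omega
  · rintro ⟨x, hx, rfl⟩
    exact ⟨Finset.subset_insert _ _, by rw [Finset.card_insert_of_notMem hx, hS]⟩

lemma supersets_card (m k : ℕ) (S : Finset (Fin m)) (hS : S.card = k) :
    (univ.filter fun T : Finset (Fin m) => S ⊆ T ∧ T.card = k + 1).card = m - k := by
  rw [supersets_eq m k S hS, Finset.card_image_of_injOn, Finset.card_compl, hS,
    Fintype.card_fin]
  intro x hx y hy hxy
  have hx' : x ∉ S := Finset.mem_compl.mp hx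
  have : x ∈ insert y S := by rw [show insert y S = insert x S from hxy.symm]; exact Finset.mem_insert_self x S
  rcases Finset.mem_insert.mp this with h | h
  · exact h
  · exact absurd h hx' 

lemma level_matching (m k : ℕ) (hk : 2 * (k + 1) ≤ m) :
    ∃ f : Finset (Fin m) → Finset (Fin m),
      (∀ S : Finset (Fin m), S.card = k → S ⊆ f S ∧ (f S).card = k + 1) ∧
      (∀ S T : Finset (Fin m), S.card = k → T.card = k → f S = f T → S = T) := by
  classical
  set ι := {S : Finset (Fin m) // S.card = k}
  set t : ι → Finset (Finset (Fin m)) :=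
    fun S => univ.filter fun T => S.1 ⊆ T ∧ T.card = k + 1 with ht
  have hall : ∀ A : Finset ι, A.card ≤ (A.biUnion t).card := by
    intro A
    set N := A.biUnion t with hN
    -- double counting
    have hedge : ∀ S : ι, S ∈ A → (t S).card = m - k := fun S _ => supersets_card m k S.1 S.2
    have h1 : A.card * (m - k) = ∑ S ∈ A, (t S).card := by
      rw [Finset.sum_congr rfl hedge, Finset.sum_const, smul_eq_mul]
    have hsub : ∀ S : ι, S ∈ A → t S ⊆ N := fun S hS => Finset.subset_biUnion_of_mem t hS
    have h2 : ∑ S ∈ A, (t S).card = ∑ S ∈ A, (N.filter fun T => T ∈ t S).card := by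
      apply Finset.sum_congr rfl
      intro S hS
      congr 1
      rw [Finset.filter_mem_eq_inter, Finset.inter_eq_right.mpr (hsub S hS)]
    have h3 : ∀ T : Finset (Fin m), T ∈ N → (A.filter fun S => T ∈ t S).card ≤ k + 1 := by
      intro T hT
      have hTcard : T.card = k + 1 := by
        rw [hN] at hT
        obtain ⟨S, _, hTS⟩ := Finset.mem_biUnion.mp hT
        exact (Finset.mem_filter.mp hTS).2.2
      calc (A.filter fun S => T ∈ t S).card ≤ (T.powersetCard k).card := by
            apply Finset.card_le_card_of_injOn (fun S => S.1)
            · intro S hS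
              simp only [Finset.mem_coe, Finset.mem_filter, ht] at hS
              rcases hS with ⟨_, hS2⟩
              simp only [Finset.mem_filter, Finset.mem_univ, true_and] at hS2
              exact Finset.mem_powersetCard.mpr ⟨hS2.1, S.2⟩
            · intro x _ y _ h
              exact Subtype.ext h
        _ = k + 1 := by rw [Finset.card_powersetCard, hTcard, Nat.choose_succ_self_right]
    have h4 : ∑ S ∈ A, (N.filter fun T => T ∈ t S).card ≤ N.card * (k + 1) := by
      calc ∑ S ∈ A, (N.filter fun T => T ∈ t S).card
          = ∑ S ∈ A, ∑ T ∈ N, (if T ∈ t S then 1 else 0) := by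
            apply Finset.sum_congr rfl; intro S _; rw [Finset.card_filter]
        _ = ∑ T ∈ N, ∑ S ∈ A, (if T ∈ t S then 1 else 0) := Finset.sum_comm
        _ = ∑ T ∈ N, (A.filter fun S => T ∈ t S).card := by
            apply Finset.sum_congr rfl; intro T _; rw [Finset.card_filter]
        _ ≤ ∑ T ∈ N, (k + 1) := Finset.sum_le_sum h3
        _ = N.card * (k + 1) := by rw [Finset.sum_const, smul_eq_mul]
    have key : A.card * (m - k) ≤ N.card * (m - k) := by
      calc A.card * (m - k) = ∑ S ∈ A, (t S).card := h1
        _ ≤ N.card * (k + 1) := h2 ▸ h4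
        _ ≤ N.card * (m - k) := Nat.mul_le_mul_left _ (by omega)
    exact Nat.le_of_mul_le_mul_right key (by omega)
  obtain ⟨F, hFinj, hFmem⟩ := (Finset.all_card_le_biUnion_card_iff_exists_injective t).mp hall
  refine ⟨fun S => if h : S.card = k then F ⟨S, h⟩ else S, ?_, ?_⟩
  · intro S hS
    simp only [dif_pos hS]
    have := hFmem ⟨S, hS⟩
    simp only [ht, Finset.mem_filter, Finset.mem_univ, true_and] at this
    exact this
  · intro S T hS hT hST
    simp only [dif_pos hS, dif_pos hT] at hST
    have := hFinj hST
    exact congrArg Subtype.val this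

lemma push_lemma (m h n : ℕ) (hh : 2 * h ≤ m) :
    ∀ d k, k + d = h → ∀ g : Fin n → Finset (Fin m),
      (∀ i j, i ≠ j → ¬ g i ⊆ g j) →
      (∀ i, k ≤ (g i).card ∧ (g i).card ≤ h) →
      ∃ g' : Fin n → Finset (Fin m),
        (∀ i j, i ≠ j → ¬ g' i ⊆ g' j) ∧ ∀ i, g i ⊆ g' i ∧ (g' i).card = h := by
  intro d
  induction d with
  | zero =>
    intro k hk g hanti hcard
    exact ⟨g, hanti, fun i => ⟨subset_rfl, by have := hcard i; omega⟩⟩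
  | succ d ih =>
    intro k hk g hanti hcard
    obtain ⟨f, hf1, hf2⟩ := level_matching m k (by omega)
    set g₁ : Fin n → Finset (Fin m) := fun i => if (g i).card = k then f (g i) else g i with hg₁
    have hsub1 : ∀ i, g i ⊆ g₁ i := by
      intro i; simp only [hg₁]; split_ifs with hc
      · exact (hf1 _ hc).1
      · exact subset_rfl
    have hcard1 : ∀ i, k + 1 ≤ (g₁ i).card ∧ (g₁ i).card ≤ h := by
      intro i; simp only [hg₁]; split_ifs with hc
      · have := (hf1 _ hc).2; omega
      · have := hcard i; omega
    have hanti1 : ∀ i j, i ≠ j → ¬ g₁ i ⊆ g₁ j := by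
      intro i j hij hsub
      simp only [hg₁] at hsub
      split_ifs at hsub with hci hcj hcj
      · have heq : f (g i) = f (g j) :=
          Finset.eq_of_subset_of_card_le hsub (by rw [(hf1 _ hci).2, (hf1 _ hcj).2])
        have : g i = g j := hf2 _ _ hci hcj heq
        exact hanti i j hij (this ▸ subset_rfl)
      · exact hanti i j hij ((hf1 _ hci).1.trans hsub)
      · have hle : (f (g j)).card ≤ (g i).card := by
          rw [(hf1 _ hcj).2]; have := hcard i; omega
        have heq : g i = f (g j) := Finset.eq_of_subset_of_card_le hsub hle
        exact hanti j i hij.symm (heq ▸ (hf1 _ hcj).1)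
      · exact hanti i j hij hsub
    obtain ⟨g', hg'anti, hg'⟩ := ih (k + 1) (by omega) g₁ hanti1 hcard1
    exact ⟨g', hg'anti, fun i => ⟨(hsub1 i).trans (hg' i).1, (hg' i).2⟩⟩

lemma pair_row {m n : ℕ} {C : Fin m → Fin n → Fin 2} (hC : IsCoveringArray m n 2 2 C)
    {i j : Fin n} (hij : i ≠ j) (a b : Fin 2) : ∃ r, C r i = a ∧ C r j = b := by
  have hinj : Function.Injective ![i, j] := by
    intro x y hxy
    fin_cases x <;> fin_cases y <;> simp_all
  obtain ⟨r, hr⟩ := hC ![i, j] hinj ![a, b]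
  exact ⟨r, by simpa using hr 0, by simpa using hr 1⟩


/-- a binary 2-covering array whose columns all have weight at most `⌊m/2⌋`
can be turned into one all of whose columns have weight exactly `⌊m/2⌋`, enlarging supports. -/
theorem weight_saturation (m n : ℕ) (hm : 4 ≤ m) (C : Fin m → Fin n → Fin 2)
    (hC : IsCoveringArray m n 2 2 C)
    (hwt : ∀ i : Fin n, colWt C i ≤ m / 2) :
    ∃ C' : Fin m → Fin n → Fin 2, IsCoveringArray m n 2 2 C' ∧
      ∀ i : Fin n, colWt C' i = m / 2 ∧ colSupp C i ⊆ colSupp C' i := by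
  classical
  set S : Fin n → Finset (Fin m) := fun i => colSupp C i with hS
  have memS : ∀ (r : Fin m) (i : Fin n), C r i = 1 → r ∈ S i := by
    intro r i hri; simp [hS, colSupp, hri]
  have notS : ∀ (r : Fin m) (i : Fin n), C r i = 0 → r ∉ S i := by
    intro r i hri; simp [hS, colSupp, hri]
  have hanti : ∀ i j : Fin n, i ≠ j → ¬ S i ⊆ S j := by
    intro i j hij hsub
    obtain ⟨r, hri, hrj⟩ := pair_row hC hij 1 0
    exact notS r j hrj (hsub (memS r i hri))
  have hcard : ∀ i, 0 ≤ (S i).card ∧ (S i).card ≤ m / 2 := fun i => ⟨Nat.zero_le _, hwt i⟩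
  obtain ⟨T, hTanti, hT⟩ :=
    push_lemma m (m / 2) n (by omega) (m / 2) 0 (by omega) S hanti hcard
  set C' : Fin m → Fin n → Fin 2 := fun r i => if r ∈ T i then 1 else 0 with hC'
  have hsupp : ∀ i, colSupp C' i = T i := by
    intro i; ext r
    simp only [colSupp, Finset.mem_filter, Finset.mem_univ, true_and, hC']
    split_ifs with hmem <;> simp [hmem]
  have hST : ∀ i, S i ⊆ T i := fun i => (hT i).1
  have hmemC' : ∀ (r : Fin m) (i : Fin n), C' r i = 1 ↔ r ∈ T i := by
    intro r i; simp only [hC']; split_ifs with hmem <;> simp [hmem]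
  have hmemC'0 : ∀ (r : Fin m) (i : Fin n), C' r i = 0 ↔ r ∉ T i := by
    intro r i; simp only [hC']; split_ifs with hmem <;> simp [hmem]
  have hcov : IsCoveringArray m n 2 2 C' := by
    intro cols hinj v
    have hij : cols 0 ≠ cols 1 := fun hcc => absurd (hinj hcc) (by decide)
    have key : ∀ a b : Fin 2, ∃ r, C' r (cols 0) = a ∧ C' r (cols 1) = b := by
      intro a b
      have hfin : ∀ c : Fin 2, c = 0 ∨ c = 1 := by decide
      rcases hfin a with rfl | rfl <;> rcases hfin b with rfl | rfl
      · -- (0,0) : a row outside T i ∪ T j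
        obtain ⟨r, hri, hrj⟩ := pair_row hC hij 1 1
        have hint : r ∈ T (cols 0) ∩ T (cols 1) :=
          Finset.mem_inter.mpr ⟨hST _ (memS r _ hri), hST _ (memS r _ hrj)⟩
        have hcu : (T (cols 0) ∪ T (cols 1)).card < m := by
          have h1 := Finset.card_union_add_card_inter (T (cols 0)) (T (cols 1))
          have h2 : 1 ≤ (T (cols 0) ∩ T (cols 1)).card := Finset.card_pos.mpr ⟨r, hint⟩
          have h3 := (hT (cols 0)).2
          have h4 := (hT (cols 1)).2
          omega
        have hne : ((T (cols 0) ∪ T (cols 1))ᶜ : Finset (Fin m)).Nonempty := by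
          rw [← Finset.card_pos, Finset.card_compl, Fintype.card_fin]
          omega
        obtain ⟨r', hr'⟩ := hne
        rw [Finset.mem_compl, Finset.mem_union] at hr'
        push_neg at hr'
        exact ⟨r', (hmemC'0 _ _).mpr hr'.1, (hmemC'0 _ _).mpr hr'.2⟩
      · -- (0,1) : element of T j \ T i
        obtain ⟨x, hx1, hx2⟩ := Finset.not_subset.mp (hTanti (cols 1) (cols 0) hij.symm)
        exact ⟨x, (hmemC'0 _ _).mpr hx2, (hmemC' _ _).mpr hx1⟩
      · -- (1,0)
        obtain ⟨x, hx1, hx2⟩ := Finset.not_subset.mp (hTanti (cols 0) (cols 1) hij)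
        exact ⟨x, (hmemC' _ _).mpr hx1, (hmemC'0 _ _).mpr hx2⟩
      · -- (1,1)
        obtain ⟨r, hri, hrj⟩ := pair_row hC hij 1 1
        exact ⟨r, (hmemC' _ _).mpr (hST _ (memS r _ hri)),
          (hmemC' _ _).mpr (hST _ (memS r _ hrj))⟩
    obtain ⟨r, hr0, hr1⟩ := key (v 0) (v 1)
    refine ⟨r, fun jj => ?_⟩
    fin_cases jj
    · exact hr0
    · exact hr1
  refine ⟨C', hcov, fun i => ⟨?_, ?_⟩⟩
  · have : colWt C' i = (colSupp C' i).card := rfl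
    rw [this, hsupp i, (hT i).2]
  · rw [hsupp i]; exact hST i
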